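/- If rational numbers x1,x2,x3,d1,d2,d3 satisfy the Euler factor equations p̃2 = p̃3 = p̃4 = p̃5 = p̃6 = p̃7 = p̃8 = 0 and the 3×7 matrix N whose i-th row is (1, d_i, x_i, x_i·d_i, x_i², d_i², x_i²·d_i²) has rank N = 1, then p1 = p2 = p3 = 0. -/

import Mathlib

open Matrix

theorem rank_one_case_euler
    (x1 x2 x3 d1 d2 d3 : ℚ)
    (h2 : (x2^2 + x3^2 - d1^2) + (x3^2 + x1^2 - d2^2) + (x1^2 + x2^2 - d3^2) = 0)
    (h3 : d1 * (x2^2 + x3^2 - d1^2) + d2 * (x3^2 + x1^2 - d2^2) + d3 * (x1^2 + x2^2 - d3^2) = 0)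
    (h4 : x1 * (x2^2 + x3^2 - d1^2) + x2 * (x3^2 + x1^2 - d2^2) + x3 * (x1^2 + x2^2 - d3^2) = 0)
    (h5 : x1 * d1 * (x2^2 + x3^2 - d1^2) + x2 * d2 * (x3^2 + x1^2 - d2^2) + x3 * d3 * (x1^2 + x2^2 - d3^2) = 0)
    (h6 : x1^2 * (x2^2 + x3^2 - d1^2) + x2^2 * (x3^2 + x1^2 - d2^2) + x3^2 * (x1^2 + x2^2 - d3^2) = 0)
    (h7 : d1^2 * (x2^2 + x3^2 - d1^2) + d2^2 * (x3^2 + x1^2 - d2^2) + d3^2 * (x1^2 + x2^2 - d3^2) = 0)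
    (h8 : x1^2 * d1^2 * (x2^2 + x3^2 - d1^2) + x2^2 * d2^2 * (x3^2 + x1^2 - d2^2) + x3^2 * d3^2 * (x1^2 + x2^2 - d3^2) = 0)
    (hrk : (!![(1:ℚ), d1, x1, x1*d1, x1^2, d1^2, x1^2*d1^2;
        1, d2, x2, x2*d2, x2^2, d2^2, x2^2*d2^2;
        1, d3, x3, x3*d3, x3^2, d3^2, x3^2*d3^2]).rank = 1)
    : (x2^2 + x3^2 - d1^2) = 0 ∧ (x3^2 + x1^2 - d2^2) = 0 ∧ (x1^2 + x2^2 - d3^2) = 0 := by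
  set A : Matrix (Fin 3) (Fin 7) ℚ := !![(1:ℚ), d1, x1, x1*d1, x1^2, d1^2, x1^2*d1^2;
        1, d2, x2, x2*d2, x2^2, d2^2, x2^2*d2^2;
        1, d3, x3, x3*d3, x3^2, d3^2, x3^2*d3^2] with hA
  have hspan : Module.finrank ℚ (Submodule.span ℚ (Set.range Aᵀ)) = 1 := by
    rw [Matrix.rank_eq_finrank_span_cols] at hrk; exact hrk
  set W := Submodule.span ℚ (Set.range Aᵀ) with hW
  have hmem : ∀ j, Aᵀ j ∈ W := fun j => Submodule.subset_span ⟨j, rfl⟩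
  have hv0ne : (⟨Aᵀ 0, hmem 0⟩ : W) ≠ 0 := by
    intro h
    have h0 := congrArg (fun w : W => (w : Fin 3 → ℚ) 0) h
    simp [hA, Matrix.transpose_apply] at h0
  have hall := (finrank_eq_one_iff_of_nonzero' (⟨Aᵀ 0, hmem 0⟩ : W) hv0ne).mp hspan
  have hd : d1 = d2 ∧ d2 = d3 := by
    obtain ⟨c, hc⟩ := hall ⟨Aᵀ 1, hmem 1⟩
    have h1 := congrArg (fun w : W => (w : Fin 3 → ℚ) 0) hc
    have h2' := congrArg (fun w : W => (w : Fin 3 → ℚ) 1) hc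
    have h3' := congrArg (fun w : W => (w : Fin 3 → ℚ) 2) hc
    simp [hA, Matrix.transpose_apply, Matrix.vecHead, Matrix.vecTail] at h1 h2' h3'
    constructor <;> linarith
  have hx : x1 = x2 ∧ x2 = x3 := by
    obtain ⟨c, hc⟩ := hall ⟨Aᵀ 2, hmem 2⟩
    have h1 := congrArg (fun w : W => (w : Fin 3 → ℚ) 0) hc
    have h2' := congrArg (fun w : W => (w : Fin 3 → ℚ) 1) hc
    have h3' := congrArg (fun w : W => (w : Fin 3 → ℚ) 2) hc
    simp [hA, Matrix.transpose_apply, Matrix.vecHead, Matrix.vecTail] at h1 h2' h3'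
    constructor <;> linarith
  obtain ⟨hd12, hd23⟩ := hd
  obtain ⟨hx12, hx23⟩ := hx
  subst hd12; subst hd23; subst hx12; subst hx23
  refine ⟨by linarith, by linarith, by linarith⟩
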